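/- For any probability distribution p over a countable alphabet, any n ≥ 1 and any real r ≥ 1, E[M_r(X^n)] = ∑_u p(u)^r(1-p(u))^n ≤ (q*)^{r-1}(1-q*)^n where q* = (r-1)/(r-1+n). In particular E[M_r(X^n)] = O(n^{-(r-1)}). -/

import Mathlib

open MeasureTheory Real
open scoped ENNReal NNReal

lemma max_lemma (r : ℝ) (hr : 1 ≤ r) (n : ℕ) (hn : 1 ≤ n) (q : ℝ) (hq0 : 0 ≤ q) (hq1 : q ≤ 1) :
    q ^ (r-1) * (1-q)^n ≤ ((r-1)/(r-1+n)) ^ (r-1) * (1-(r-1)/(r-1+n))^n := by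
  have hn0 : (0:ℝ) < n := by exact_mod_cast hn
  have hs : (0:ℝ) < r - 1 + n := by linarith
  have hw2eq : 1 - (r-1)/(r-1+n) = n / (r-1+n) := by field_simp; ring
  rw [hw2eq]
  rcases eq_or_lt_of_le hr with h1 | h1
  · subst h1
    simp only [sub_self, Real.rpow_zero, one_mul, zero_div]
    calc (1-q)^n ≤ 1 := pow_le_one₀ (by linarith) (by linarith)
    _ = ((n:ℝ)/(0+n))^n := by rw [zero_add, div_self hn0.ne']; norm_num
  · -- r > 1
    set w₁ := (r-1)/(r-1+n) with hw₁def
    set w₂ := (n:ℝ)/(r-1+n) with hw₂def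
    have hw₁ : 0 < w₁ := div_pos (by linarith) hs
    have hw₂ : 0 < w₂ := div_pos hn0 hs
    have hw12 : w₁ + w₂ = 1 := by rw [hw₁def, hw₂def]; field_simp
    rcases eq_or_lt_of_le hq0 with hq | hq
    · rw [← hq, Real.zero_rpow (by linarith), zero_mul]
      positivity
    · set a := q / w₁ with ha
      set b := (1-q) / w₂ with hb
      have ha0 : 0 ≤ a := div_nonneg hq0 hw₁.le
      have hb0 : 0 ≤ b := div_nonneg (by linarith) hw₂.le
      have hgm : a ^ w₁ * b ^ w₂ ≤ 1 := by
        calc a ^ w₁ * b ^ w₂ ≤ w₁ * a + w₂ * b :=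
          Real.geom_mean_le_arith_mean2_weighted hw₁.le hw₂.le ha0 hb0 hw12
        _ = q + (1-q) := by rw [ha, hb]; field_simp
        _ = 1 := by ring
      have hmul1 : w₁ * (r-1+n) = r-1 := by rw [hw₁def]; field_simp
      have hmul2 : w₂ * (r-1+n) = (n:ℝ) := by rw [hw₂def]; field_simp
      have hkey : a ^ (r-1) * b ^ n ≤ 1 := by
        have h2 : (a ^ w₁ * b ^ w₂) ^ (r-1+n) ≤ 1 :=
          Real.rpow_le_one (by positivity) hgm hs.le
        calc a ^ (r-1) * b ^ n = (a ^ w₁ * b ^ w₂) ^ (r-1+n) := by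
              rw [Real.mul_rpow (by positivity) (by positivity),
                ← Real.rpow_natCast b n, ← Real.rpow_mul ha0, ← Real.rpow_mul hb0,
                hmul1, hmul2]
        _ ≤ 1 := h2
    
      have hq' : q = a * w₁ := by rw [ha]; field_simp
      have h1q' : 1 - q = b * w₂ := by rw [hb]; field_simp
      calc q ^ (r-1) * (1-q)^n = (a ^ (r-1) * b ^ n) * (w₁ ^ (r-1) * w₂ ^ n) := by
            rw [h1q', hq', Real.mul_rpow ha0 hw₁.le, mul_pow]; ring
      _ ≤ 1 * (w₁ ^ (r-1) * w₂ ^ n) := by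
            apply mul_le_mul_of_nonneg_right hkey; positivity
      _ = w₁ ^ (r-1) * w₂ ^ n := one_mul _
lemma ptoReal_mem {X : Type*} (p : PMF X) (u : X) : 0 ≤ (p u).toReal ∧ (p u).toReal ≤ 1 :=
  ⟨ENNReal.toReal_nonneg, by
    have h := p.coe_le_one u
    simpa using ENNReal.toReal_mono (by simp) h⟩

lemma psummable {X : Type*} (p : PMF X) : Summable (fun u => (p u).toReal) ∧
    ∑' u, (p u).toReal = 1 := by
  have h1 : ∑' u, p u = 1 := p.tsum_coe
  constructor
  · exact ENNReal.summable_toReal (by rw [h1]; exact ENNReal.one_ne_top)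
  · rw [← ENNReal.tsum_toReal_eq (fun u => p.apply_ne_top u), h1, ENNReal.toReal_one]

lemma rpow_split {q : ℝ} (hq : 0 ≤ q) (r : ℝ) (hr : 1 ≤ r) : q ^ r = q * q ^ (r-1) := by
  rcases eq_or_lt_of_le hq with h | h
  · rw [← h, Real.zero_rpow (by linarith), zero_mul]
  · rw [← Real.rpow_one_add' h.le (by linarith)]; ring_nf

lemma sum_bound {X : Type*} (p : PMF X) (r : ℝ) (hr : 1 ≤ r) (n : ℕ) (hn : 1 ≤ n) :
    (∑' u : X, (p u).toReal ^ r * (1 - (p u).toReal) ^ n)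
      ≤ ((r - 1) / (r - 1 + n)) ^ (r - 1) * (1 - (r - 1) / (r - 1 + n)) ^ n := by
  set M := ((r - 1) / (r - 1 + n)) ^ (r - 1) * (1 - (r - 1) / (r - 1 + n)) ^ n with hM
  have hn0 : (0:ℝ) < n := by exact_mod_cast hn
  have hs : (0:ℝ) < r - 1 + n := by linarith
  have hM0 : 0 ≤ M := by
    rw [hM]
    have h2 : 1 - (r-1)/(r-1+n) = n / (r-1+n) := by field_simp; ring
    rw [h2]
    exact mul_nonneg (Real.rpow_nonneg (div_nonneg (by linarith) hs.le) _)
      (pow_nonneg (div_nonneg hn0.le hs.le) _)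
  have hterm : ∀ u : X, (p u).toReal ^ r * (1 - (p u).toReal) ^ n ≤ (p u).toReal * M := by
    intro u
    obtain ⟨h0, h1⟩ := ptoReal_mem p u
    rw [rpow_split h0 r hr, mul_assoc]
    exact mul_le_mul_of_nonneg_left (max_lemma r hr n hn _ h0 h1) h0
  have htermnn : ∀ u : X, 0 ≤ (p u).toReal ^ r * (1 - (p u).toReal) ^ n := by
    intro u
    obtain ⟨h0, h1⟩ := ptoReal_mem p u
    have : 0 ≤ 1 - (p u).toReal := by linarith
    positivity
  obtain ⟨hsum, htsum⟩ := psummable p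
  calc (∑' u : X, (p u).toReal ^ r * (1 - (p u).toReal) ^ n)
      ≤ ∑' u : X, (p u).toReal * M :=
        Summable.tsum_le_tsum hterm (Summable.of_nonneg_of_le htermnn hterm (hsum.mul_right M)) (hsum.mul_right M)
  _ = M := by rw [tsum_mul_right, htsum, one_mul]
lemma part3 (r : ℝ) (hr : 1 ≤ r) (n : ℕ) (hn : 1 ≤ n) :
    ((r - 1) / (r - 1 + n)) ^ (r - 1) * (1 - (r - 1) / (r - 1 + n)) ^ n
      ≤ (r-1) ^ (r-1) * (n : ℝ) ^ (1 - r) := by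
  have hn0 : (0:ℝ) < n := by exact_mod_cast hn
  have hs : (0:ℝ) < r - 1 + n := by linarith
  have hq0 : 0 ≤ (r-1)/(r-1+n) := div_nonneg (by linarith) hs.le
  have hq1 : (r-1)/(r-1+n) ≤ 1 := by rw [div_le_one hs]; linarith
  have h1 : (1 - (r-1)/(r-1+n)) ^ n ≤ 1 := pow_le_one₀ (by linarith) (by linarith)
  calc ((r - 1) / (r - 1 + n)) ^ (r - 1) * (1 - (r - 1) / (r - 1 + n)) ^ n
      ≤ ((r - 1) / (r - 1 + n)) ^ (r - 1) * 1 :=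
        mul_le_mul_of_nonneg_left h1 (Real.rpow_nonneg hq0 _)
  _ = ((r - 1) / (r - 1 + n)) ^ (r - 1) := mul_one _
  _ ≤ ((r - 1) / n) ^ (r - 1) := by
      apply Real.rpow_le_rpow hq0 _ (by linarith)
      rw [div_le_div_iff₀ hs hn0]
      nlinarith
  _ = (r-1) ^ (r-1) * (n : ℝ) ^ (1 - r) := by
      rw [Real.div_rpow (by linarith) hn0.le, div_eq_mul_inv, ← Real.rpow_neg hn0.le]
      ring_nf
lemma integral_part {X : Type*} [MeasurableSpace X] [MeasurableSingletonClass X]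
    [Countable X] [DecidableEq X]
    (p : PMF X) (r : ℝ) (hr : 1 ≤ r) (n : ℕ) (hn : 1 ≤ n) :
    (∫ x : Fin n → X,
        (∑' u : X,
          if (Finset.univ.filter fun i => x i = u).card = 0 then (p u).toReal ^ r else 0)
      ∂(Measure.pi fun _ : Fin n => p.toMeasure))
    = ∑' u : X, (p u).toReal ^ r * (1 - (p u).toReal) ^ n := by
  set μ := Measure.pi fun _ : Fin n => p.toMeasure with hμ
  set A : X → Set (Fin n → X) := fun u => Set.univ.pi (fun _ => ({u} : Set X)ᶜ) with hA
  have hAmem : ∀ u (x : Fin n → X), x ∈ A u ↔ ∀ i, x i ≠ u := by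
    intro u x; simp [hA]
  have hAmeas : ∀ u, MeasurableSet (A u) :=
    fun u => MeasurableSet.univ_pi (fun _ => (measurableSet_singleton u).compl)
  have hAvol : ∀ u, μ (A u) = (1 - p u) ^ n := by
    intro u
    rw [hμ, hA, Measure.pi_pi]
    have h1 : p.toMeasure ({u} : Set X)ᶜ = 1 - p u := by
      rw [measure_compl (measurableSet_singleton u) (measure_ne_top _ _),
        p.toMeasure_apply_singleton u (measurableSet_singleton u)]
      simp
    simp [h1]
  set f : X → (Fin n → X) → ℝ := fun u => (A u).indicator (fun _ => (p u).toReal ^ r) with hf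
  have hcond : ∀ (x : Fin n → X) (u : X),
      (if (Finset.univ.filter fun i => x i = u).card = 0 then (p u).toReal ^ r else 0) = f u x := by
    intro x u
    show _ = (A u).indicator (fun _ => (p u).toReal ^ r) x
    by_cases h : ∀ i, x i ≠ u
    · rw [Set.indicator_of_mem ((hAmem u x).2 h), if_pos]
      simp [Finset.card_eq_zero, Finset.filter_eq_empty_iff, h]
    · rw [Set.indicator_of_notMem (fun hx => h ((hAmem u x).1 hx)), if_neg]
      simp only [Finset.card_eq_zero, Finset.filter_eq_empty_iff, Finset.mem_univ]
      push_neg at h ⊢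
      obtain ⟨i, hi⟩ := h
      exact ⟨i, trivial, hi⟩
  have hptop : ∀ u, p u ≠ ⊤ := fun u => p.apply_ne_top u
  have hple : ∀ u, (0:ℝ) ≤ (p u).toReal ∧ (p u).toReal ≤ 1 := fun u =>
    ⟨ENNReal.toReal_nonneg, by simpa using ENNReal.toReal_mono (by simp) (p.coe_le_one u)⟩
  have hswap : ∫ x, (∑' u, f u x) ∂μ = ∑' u, ∫ x, f u x ∂μ := by
    apply integral_tsum
    · exact fun u => (stronglyMeasurable_const.indicator (hAmeas u)).aestronglyMeasurable
    · apply ne_top_of_le_ne_top (b := ∑' u, p u) (by rw [p.tsum_coe]; exact ENNReal.one_ne_top)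
      apply ENNReal.tsum_le_tsum
      intro u
      show (∫⁻ x, ‖(A u).indicator (fun _ => (p u).toReal ^ r) x‖₊ ∂μ) ≤ p u
      calc ∫⁻ x, ‖(A u).indicator (fun _ => (p u).toReal ^ r) x‖₊ ∂μ
          = ∫⁻ x, (A u).indicator (fun _ => (‖(p u).toReal ^ r‖₊ : ℝ≥0∞)) x ∂μ := by
            congr 1; ext x
            by_cases hx : x ∈ A u
            · rw [Set.indicator_of_mem hx, Set.indicator_of_mem hx]
            · rw [Set.indicator_of_notMem hx, Set.indicator_of_notMem hx]; simp
      _ = ‖(p u).toReal ^ r‖₊ * μ (A u) := lintegral_indicator_const (hAmeas u) _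
      _ ≤ ‖(p u).toReal ^ r‖₊ * 1 := mul_le_mul_right prob_le_one _
      _ = ENNReal.ofReal ((p u).toReal ^ r) := by
            rw [mul_one, ← enorm_eq_nnnorm, Real.enorm_eq_ofReal (Real.rpow_nonneg (hple u).1 r)]
      _ ≤ ENNReal.ofReal ((p u).toReal) := by
            apply ENNReal.ofReal_le_ofReal
            obtain ⟨h0, h1⟩ := hple u
            rcases eq_or_lt_of_le h0 with h | h
            · rw [← h, Real.zero_rpow (by linarith)]
            · calc (p u).toReal ^ r ≤ (p u).toReal ^ (1:ℝ) :=
                Real.rpow_le_rpow_of_exponent_ge h h1 hr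
              _ = (p u).toReal := Real.rpow_one _
      _ = p u := ENNReal.ofReal_toReal (hptop u)
  have hint : ∀ u, ∫ x, f u x ∂μ = (p u).toReal ^ r * (1 - (p u).toReal) ^ n := by
    intro u
    show (∫ x, (A u).indicator (fun _ => (p u).toReal ^ r) x ∂μ) = _
    rw [integral_indicator_const _ (hAmeas u), measureReal_def, hAvol u, smul_eq_mul, mul_comm]
    congr 1
    rw [ENNReal.toReal_pow]
    congr 1
    rw [ENNReal.toReal_sub_of_le (p.coe_le_one u) ENNReal.one_ne_top, ENNReal.toReal_one]
  calc (∫ x : Fin n → X, (∑' u, if (Finset.univ.filter fun i => x i = u).card = 0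
          then (p u).toReal ^ r else 0) ∂μ)
      = ∫ x, (∑' u, f u x) ∂μ := by
        congr 1; ext x; exact tsum_congr (hcond x)
  _ = ∑' u, ∫ x, f u x ∂μ := hswap
  _ = ∑' u : X, (p u).toReal ^ r * (1 - (p u).toReal) ^ n := tsum_congr hint
/-- For any probability distribution `p` over a countable alphabet, any
`n ≥ 1` and any real `r ≥ 1`, `E[M_r(X^n)] = ∑_u p(u)^r (1-p(u))^n ≤ (q*)^(r-1)(1-q*)^n`
where `q* = (r-1)/(r-1+n)`. In particular `E[M_r(X^n)] = O(n^{-(r-1)})`: there is a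
constant `C` (depending only on `r`) with `E[M_r(X^n)] ≤ C * n^(1-r)` for all `n ≥ 1`. -/
theorem expectation_Mr_le {X : Type*} [MeasurableSpace X] [MeasurableSingletonClass X]
    [Countable X] [DecidableEq X]
    (p : PMF X) (r : ℝ) (hr : 1 ≤ r) :
    (∀ n : ℕ, 1 ≤ n →
      (∫ x : Fin n → X,
          (∑' u : X,
            if (Finset.univ.filter fun i => x i = u).card = 0 then (p u).toReal ^ r else 0)
        ∂(Measure.pi fun _ : Fin n => p.toMeasure))
      = ∑' u : X, (p u).toReal ^ r * (1 - (p u).toReal) ^ n ∧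
      (∑' u : X, (p u).toReal ^ r * (1 - (p u).toReal) ^ n)
        ≤ ((r - 1) / (r - 1 + n)) ^ (r - 1) * (1 - (r - 1) / (r - 1 + n)) ^ n) ∧
    ∃ C : ℝ, ∀ n : ℕ, 1 ≤ n →
      (∑' u : X, (p u).toReal ^ r * (1 - (p u).toReal) ^ n) ≤ C * (n : ℝ) ^ (1 - r) := by
  exact ⟨fun n hn => ⟨integral_part p r hr n hn, sum_bound p r hr n hn⟩,
    ⟨(r-1)^(r-1), fun n hn => le_trans (sum_bound p r hr n hn) (part3 r hr n hn)⟩⟩
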